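/- Let (Ω, d) be a differential ∗-calculus over a unital ∗-algebra B equipped with an almost complex structure ⊕_{(a,b)∈ℕ²} Ω^{(a,b)}, and let ∂ and ∂̄ be the unique homogeneous operators of bidegree (1,0) and (0,1) defined on Ω^{(a,b)} by composing d with the projections onto Ω^{(a+1,b)} and Ω^{(a,b+1)} respectively. Then the following are equivalent: (i) d = ∂ + ∂̄; (ii) ∂² = 0, ∂̄² = 0, and ∂∂̄ = −∂̄∂ (that is, (⊕_{(a,b)} Ω^{(a,b)}, ∂, ∂̄) is a double complex). -/

import Mathlib

/-- For an almost complex structure `⊕_{(a,b)} Ω^{(a,b)}` on a differential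
∗-calculus `(Ω, d)` over a unital ∗-algebra `B = Ω⁰`, with `∂` and `∂̄` the
homogeneous operators of bidegree `(1,0)` and `(0,1)` obtained by composing `d`
with the projections, the following are equivalent: (i) `d = ∂ + ∂̄`;
(ii) `(⊕ Ω^{(a,b)}, ∂, ∂̄)` is a double complex, i.e. `∂² = 0`, `∂̄² = 0` and
`∂∂̄ = −∂̄∂`. -/
theorem almost_complex_integrable_iff_double_complex
    {Ω : Type*} [Ring Ω] [Algebra ℂ Ω]
    -- the ℕ-grading of the calculus:
    (G : ℕ → Submodule ℂ Ω) [GradedAlgebra G]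
    -- the differential:
    (d : Ω →ₗ[ℂ] Ω)
    (hd_deg : ∀ k : ℕ, ∀ ω ∈ G k, d ω ∈ G (k + 1))
    (hd2 : ∀ ω : Ω, d (d ω) = 0)
    (hleibniz : ∀ k : ℕ, ∀ α ∈ G k, ∀ β : Ω,
      d (α * β) = d α * β + ((-1 : ℂ) ^ k) • (α * d β))
    -- `Ω^k = span_ℂ {a₀ da₁ ⋯ da_k}` (surjectivity hypothesis of a calculus):
    (hspan : ∀ k : ℕ, G k = Submodule.span ℂ
      {ω : Ω | ∃ (a₀ : Ω) (f : Fin k → Ω), a₀ ∈ G 0 ∧ (∀ i, f i ∈ G 0) ∧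
        ω = a₀ * (List.ofFn fun i => d (f i)).prod})
    -- the conjugate-linear involution of the ∗-calculus:
    (st : Ω → Ω)
    (hst_add : ∀ ω ν : Ω, st (ω + ν) = st ω + st ν)
    (hst_smul : ∀ (c : ℂ) (ω : Ω), st (c • ω) = (starRingEnd ℂ) c • st ω)
    (hst_invol : ∀ ω : Ω, st (st ω) = ω)
    (hst_d : ∀ ω : Ω, st (d ω) = d (st ω))
    (hst_mul : ∀ k l : ℕ, ∀ ω ∈ G k, ∀ ν ∈ G l,
      st (ω * ν) = ((-1 : ℂ) ^ (k * l)) • (st ν * st ω))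
    -- the almost complex structure: an `ℕ × ℕ`-grading refining the ℕ-grading,
    (W : ℕ × ℕ → Submodule ℂ Ω) [GradedAlgebra W]
    (hGW : ∀ k : ℕ, G k = ⨆ (p : ℕ × ℕ) (_ : p.1 + p.2 = k), W p)
    -- with `(Ω^{(a,b)})∗ = Ω^{(b,a)}`:
    (hst_W : ∀ a b : ℕ, ∀ ω ∈ W (a, b), st ω ∈ W (b, a))
    -- `∂` and `∂̄`, defined on `Ω^{(a,b)}` by projecting `d`:
    (pd pb : Ω →ₗ[ℂ] Ω)
    (hpd : ∀ a b : ℕ, ∀ ω ∈ W (a, b),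
      pd ω = GradedAlgebra.proj W (a + 1, b) (d ω))
    (hpb : ∀ a b : ℕ, ∀ ω ∈ W (a, b),
      pb ω = GradedAlgebra.proj W (a, b + 1) (d ω)) :
    (∀ ω : Ω, d ω = pd ω + pb ω) ↔
      ((∀ ω : Ω, pd (pd ω) = 0) ∧ (∀ ω : Ω, pb (pb ω) = 0) ∧
        (∀ ω : Ω, pd (pb ω) = - pb (pd ω))) := by
  classical
  -- Basic facts about the projections of the bigrading `W`.
  have hmemW : ∀ (p : ℕ × ℕ) (x : Ω), GradedAlgebra.proj W p x ∈ W p := by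
    intro p x
    rw [GradedAlgebra.proj_apply]
    exact (DirectSum.decompose W x p).2
  have hsame : ∀ (p : ℕ × ℕ) (x : Ω), x ∈ W p → GradedAlgebra.proj W p x = x := by
    intro p x h
    rw [GradedAlgebra.proj_apply]
    exact DirectSum.decompose_of_mem_same W h
  have hne : ∀ (p q : ℕ × ℕ) (x : Ω), x ∈ W p → p ≠ q → GradedAlgebra.proj W q x = 0 := by
    intro p q x h hpq
    rw [GradedAlgebra.proj_apply]
    exact DirectSum.decompose_of_mem_ne W h hpq
  have hWG : ∀ p : ℕ × ℕ, W p ≤ G (p.1 + p.2) := by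
    intro p
    rw [hGW]
    exact le_iSup_of_le p (le_iSup_of_le rfl le_rfl)
  -- An element of `G k` is the sum of its bihomogeneous components.
  have hGdec : ∀ (k : ℕ) (z : Ω), z ∈ G k →
      z = ∑ j ∈ Finset.range (k + 1), GradedAlgebra.proj W (k - j, j) z := by
    intro k z hz
    rw [hGW] at hz
    refine Submodule.iSup_induction (motive := fun z =>
      z = ∑ j ∈ Finset.range (k + 1), GradedAlgebra.proj W (k - j, j) z) _ hz ?_ ?_ ?_
    · intro q x hx
      by_cases h : q.1 + q.2 = k
      · rw [iSup_pos h] at hx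
        rw [Finset.sum_eq_single_of_mem q.2 (by simp; omega)]
        · have e : (k - q.2, q.2) = q := by
            obtain ⟨a, b⟩ := q
            simp only [Prod.mk.injEq, and_true]
            omega
          rw [e, hsame q x hx]
        · intro j _ hj
          exact hne q _ x hx (fun e => hj ((congrArg Prod.snd e).symm))
      · rw [iSup_neg h] at hx
        simp only [Submodule.mem_bot] at hx
        simp [hx]
    · simp
    · intro x y hx hy
      simp only [map_add, Finset.sum_add_distrib]
      rw [← hx, ← hy]
  have hG1dec : ∀ z ∈ G 1,
      z = GradedAlgebra.proj W (1, 0) z + GradedAlgebra.proj W (0, 1) z := by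
    intro z hz
    simpa [Finset.sum_range_succ] using hGdec 1 z hz
  have hG2dec : ∀ z ∈ G 2,
      z = GradedAlgebra.proj W (2, 0) z + GradedAlgebra.proj W (1, 1) z
        + GradedAlgebra.proj W (0, 2) z := by
    intro z hz
    simpa [Finset.sum_range_succ] using hGdec 2 z hz
  constructor
  · -- (i) ⇒ (ii)
    intro H
    have key : ∀ (a b : ℕ) (ω : Ω), ω ∈ W (a, b) →
        pd (pd ω) = 0 ∧ pb (pb ω) = 0 ∧ pd (pb ω) = - pb (pd ω) := by
      intro a b ω hω
      have hu : pd ω ∈ W (a + 1, b) := by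
        rw [hpd a b ω hω]; exact hmemW _ _
      have hv : pb ω ∈ W (a, b + 1) := by
        rw [hpb a b ω hω]; exact hmemW _ _
      have h20 : pd (pd ω) ∈ W (a + 2, b) := by
        rw [hpd (a + 1) b _ hu]; exact hmemW _ _
      have h11 : pb (pd ω) ∈ W (a + 1, b + 1) := by
        rw [hpb (a + 1) b _ hu]; exact hmemW _ _
      have h11' : pd (pb ω) ∈ W (a + 1, b + 1) := by
        rw [hpd a (b + 1) _ hv]; exact hmemW _ _
      have h02 : pb (pb ω) ∈ W (a, b + 2) := by
        rw [hpb a (b + 1) _ hv]; exact hmemW _ _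
      have heq : pd (pd ω) + pb (pd ω) + (pd (pb ω) + pb (pb ω)) = 0 := by
        have h0 := hd2 ω
        rw [H ω, map_add, H (pd ω), H (pb ω)] at h0
        exact h0
      refine ⟨?_, ?_, ?_⟩
      · have e1 := congrArg (GradedAlgebra.proj W (a + 2, b)) heq
        rw [map_add, map_add, map_add, map_zero, hsame _ _ h20,
          hne _ _ _ h11 (by simp only [ne_eq, Prod.mk.injEq, not_and]; omega),
          hne _ _ _ h11' (by simp only [ne_eq, Prod.mk.injEq, not_and]; omega),
          hne _ _ _ h02 (by simp only [ne_eq, Prod.mk.injEq, not_and]; omega)] at e1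
        simpa using e1
      · have e1 := congrArg (GradedAlgebra.proj W (a, b + 2)) heq
        rw [map_add, map_add, map_add, map_zero, hsame _ _ h02,
          hne _ _ _ h11 (by simp only [ne_eq, Prod.mk.injEq, not_and]; omega),
          hne _ _ _ h11' (by simp only [ne_eq, Prod.mk.injEq, not_and]; omega),
          hne _ _ _ h20 (by simp only [ne_eq, Prod.mk.injEq, not_and]; omega)] at e1
        simpa using e1
      · have e1 := congrArg (GradedAlgebra.proj W (a + 1, b + 1)) heq
        rw [map_add, map_add, map_add, map_zero, hsame _ _ h11, hsame _ _ h11',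
          hne _ _ _ h20 (by simp only [ne_eq, Prod.mk.injEq, not_and]; omega),
          hne _ _ _ h02 (by simp only [ne_eq, Prod.mk.injEq, not_and]; omega)] at e1
        have e2 : pb (pd ω) + pd (pb ω) = 0 := by
          rw [zero_add, add_zero] at e1
          exact e1
        exact eq_neg_of_add_eq_zero_right e2
    refine ⟨?_, ?_, ?_⟩
    · exact DirectSum.Decomposition.inductionOn W (by simp)
        (fun {i} m => (key i.1 i.2 m m.2).1)
        (fun x y hx hy => by rw [map_add, map_add, hx, hy, add_zero])
    · exact DirectSum.Decomposition.inductionOn W (by simp)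
        (fun {i} m => (key i.1 i.2 m m.2).2.1)
        (fun x y hx hy => by rw [map_add, map_add, hx, hy, add_zero])
    · exact DirectSum.Decomposition.inductionOn W (by simp)
        (fun {i} m => (key i.1 i.2 m m.2).2.2)
        (fun x y hx hy => by rw [map_add, map_add, map_add, map_add, hx, hy, neg_add])
  · -- (ii) ⇒ (i)
    rintro ⟨h1, h2, h3⟩
    have hG0W : ∀ z ∈ G 0, z ∈ W (0, 0) := by
      intro z hz
      rw [hGW] at hz
      refine Submodule.iSup_induction (motive := fun z => z ∈ W (0, 0)) _ hz ?_ (zero_mem _)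
        (fun x y hx hy => add_mem hx hy)
      intro q x hx
      by_cases h : q.1 + q.2 = 0
      · rw [iSup_pos h] at hx
        have e : q = (0, 0) := by
          obtain ⟨a, b⟩ := q
          simp only [Prod.mk.injEq]
          omega
        rwa [e] at hx
      · rw [iSup_neg h] at hx
        simp only [Submodule.mem_bot] at hx
        simp [hx]
    have hG1le : G 1 ≤ W (1, 0) ⊔ W (0, 1) := by
      intro z hz
      rw [hG1dec z hz]
      exact add_mem (Submodule.mem_sup_left (hmemW _ _))
        (Submodule.mem_sup_right (hmemW _ _))
    set V : ℕ × ℕ → Submodule ℂ Ω := fun p =>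
      W p ⊓ Submodule.comap d (W (p.1 + 1, p.2) ⊔ W (p.1, p.2 + 1)) with hVdef
    have hVW : ∀ p, ∀ x ∈ V p, x ∈ W p := fun p x hx =>
      ((Submodule.mem_inf).mp hx).1
    have hVd : ∀ p, ∀ x ∈ V p, d x ∈ W (p.1 + 1, p.2) ⊔ W (p.1, p.2 + 1) := fun p x hx =>
      Submodule.mem_comap.mp ((Submodule.mem_inf).mp hx).2
    have hVmul : ∀ (p q : ℕ × ℕ) (ω : Ω), ω ∈ V p → ∀ ν : Ω, ν ∈ V q →
        ω * ν ∈ V (p + q) := by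
      rintro ⟨p1, p2⟩ ⟨q1, q2⟩ ω hω ν hν
      have hωW := hVW _ ω hω
      have hνW := hVW _ ν hν
      have hdω := hVd _ ω hω
      have hdν := hVd _ ν hν
      rw [Prod.mk_add_mk]
      refine Submodule.mem_inf.mpr ⟨?_, Submodule.mem_comap.mpr ?_⟩
      · simpa [Prod.mk_add_mk] using SetLike.mul_mem_graded hωW hνW
      · rw [hleibniz (p1 + p2) ω (hWG (p1, p2) hωW) ν]
        refine add_mem ?_ (Submodule.smul_mem _ _ ?_)
        · rcases Submodule.mem_sup.mp hdω with ⟨x, hx, y, hy, hxy⟩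
          rw [← hxy, add_mul]
          refine add_mem (Submodule.mem_sup_left ?_) (Submodule.mem_sup_right ?_)
          · have := SetLike.mul_mem_graded hx hνW
            rw [Prod.mk_add_mk] at this
            have e : (p1 + 1 + q1, p2 + q2) = (p1 + q1 + 1, p2 + q2) := by
              simp only [Prod.mk.injEq, and_true]; omega
            rwa [e] at this
          · have := SetLike.mul_mem_graded hy hνW
            rw [Prod.mk_add_mk] at this
            have e : (p1 + q1, p2 + 1 + q2) = (p1 + q1, p2 + q2 + 1) := by
              simp only [Prod.mk.injEq, true_and]; omega
            rwa [e] at this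
        · rcases Submodule.mem_sup.mp hdν with ⟨x, hx, y, hy, hxy⟩
          rw [← hxy, mul_add]
          refine add_mem (Submodule.mem_sup_left ?_) (Submodule.mem_sup_right ?_)
          · have := SetLike.mul_mem_graded hωW hx
            rw [Prod.mk_add_mk] at this
            have e : (p1 + (q1 + 1), p2 + q2) = (p1 + q1 + 1, p2 + q2) := by
              simp only [Prod.mk.injEq, and_true]; omega
            rwa [e] at this
          · have := SetLike.mul_mem_graded hωW hy
            rw [Prod.mk_add_mk] at this
            have e : (p1 + q1, p2 + (q2 + 1)) = (p1 + q1, p2 + q2 + 1) := by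
              simp only [Prod.mk.injEq, true_and]; omega
            rwa [e] at this
    set T : Submodule ℂ Ω := ⨆ p, V p with hTdef
    have hTmul : ∀ ω ∈ T, ∀ ν ∈ T, ω * ν ∈ T := by
      intro ω hω
      refine Submodule.iSup_induction (motive := fun ω => ∀ ν ∈ T, ω * ν ∈ T) _ hω ?_ ?_ ?_
      · intro p x hx ν hν
        refine Submodule.iSup_induction (motive := fun ν => x * ν ∈ T) _ hν ?_ ?_ ?_
        · intro q y hy
          exact Submodule.mem_iSup_of_mem (p + q) (hVmul p q x hx y hy)
        · simp
        · intro y z hy hz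
          rw [mul_add]
          exact add_mem hy hz
      · intro ν hν
        simp
      · intro x y hx hy ν hν
        rw [add_mul]
        exact add_mem (hx ν hν) (hy ν hν)
    have hG0T : G 0 ≤ V (0, 0) := by
      intro z hz
      exact Submodule.mem_inf.mpr ⟨hG0W z hz,
        Submodule.mem_comap.mpr (hG1le (hd_deg 0 z hz))⟩
    have hdG0T : ∀ a ∈ G 0, d a ∈ T := by
      intro a ha
      have haW : a ∈ W (0, 0) := hG0W a ha
      have hda : d a ∈ G 1 := hd_deg 0 a ha
      have hxy := hG1dec (d a) hda
      set x := GradedAlgebra.proj W (1, 0) (d a) with hxd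
      set y := GradedAlgebra.proj W (0, 1) (d a) with hyd
      have hx : x ∈ W (1, 0) := hmemW _ _
      have hy : y ∈ W (0, 1) := hmemW _ _
      have hxpd : x = pd a := (hpd 0 0 a haW).symm
      have hypb : y = pb a := (hpb 0 0 a haW).symm
      have hdd : d x = - d y := by
        have h0 : d x + d y = 0 := by
          rw [← map_add, ← hxy, hd2]
        exact eq_neg_of_add_eq_zero_left h0
      have hdxG : d x ∈ G 2 := hd_deg 1 x (hWG (1, 0) hx)
      have hdyG : d y ∈ G 2 := hd_deg 1 y (hWG (0, 1) hy)
      have hbx : GradedAlgebra.proj W (0, 2) (d x) = 0 := by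
        rw [hdd, map_neg]
        have hpy : GradedAlgebra.proj W (0, 2) (d y) = pb y := (hpb 0 1 y hy).symm
        rw [hpy, hypb, h2 a, neg_zero]
      have hby : GradedAlgebra.proj W (2, 0) (d y) = 0 := by
        have hdd' : d y = - d x := by rw [hdd, neg_neg]
        rw [hdd', map_neg]
        have hpx : GradedAlgebra.proj W (2, 0) (d x) = pd x := (hpd 1 0 x hx).symm
        rw [hpx, hxpd, h1 a, neg_zero]
      have hxV : x ∈ V (1, 0) := by
        refine Submodule.mem_inf.mpr ⟨hx, Submodule.mem_comap.mpr ?_⟩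
        have hdec := hG2dec (d x) hdxG
        rw [hbx, add_zero] at hdec
        rw [hdec]
        exact add_mem (Submodule.mem_sup_left (hmemW _ _))
          (Submodule.mem_sup_right (hmemW _ _))
      have hyV : y ∈ V (0, 1) := by
        refine Submodule.mem_inf.mpr ⟨hy, Submodule.mem_comap.mpr ?_⟩
        have hdec := hG2dec (d y) hdyG
        rw [hby, zero_add] at hdec
        rw [hdec]
        exact add_mem (Submodule.mem_sup_left (hmemW _ _))
          (Submodule.mem_sup_right (hmemW _ _))
      rw [hxy]
      exact add_mem (Submodule.mem_iSup_of_mem (1, 0) hxV)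
        (Submodule.mem_iSup_of_mem (0, 1) hyV)
    have hGT : ∀ k : ℕ, G k ≤ T := by
      intro k
      rw [hspan k, Submodule.span_le]
      rintro ω ⟨a₀, f, ha₀, hf, rfl⟩
      have hlist : ∀ l : List Ω, (∀ x ∈ l, x ∈ T) → l.prod ∈ T := by
        intro l
        induction l with
        | nil =>
          intro _
          simpa using Submodule.mem_iSup_of_mem (0, 0)
            (hG0T (SetLike.one_mem_graded G))
        | cons a l ih =>
          intro h
          rw [List.prod_cons]
          exact hTmul a (h a (by simp)) _ (ih fun x hx => h x (by simp [hx]))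
      refine hTmul a₀ (Submodule.mem_iSup_of_mem (0, 0) (hG0T ha₀)) _ (hlist _ ?_)
      intro x hx
      rw [List.mem_ofFn] at hx
      obtain ⟨i, rfl⟩ := hx
      exact hdG0T (f i) (hf i)
    have hTtop : ∀ ω : Ω, ω ∈ T :=
      DirectSum.Decomposition.inductionOn G (zero_mem T)
        (fun {k} m => hGT k m.2) (fun x y hx hy => add_mem hx hy)
    intro ω
    have hω := hTtop ω
    refine Submodule.iSup_induction (motive := fun ω => d ω = pd ω + pb ω) _ hω ?_ ?_ ?_
    · rintro ⟨a, b⟩ μ hμV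
      have hμ := hVW _ μ hμV
      have hdμ := hVd _ μ hμV
      rcases Submodule.mem_sup.mp hdμ with ⟨u, hu, v, hv, huv⟩
      rw [hpd a b μ hμ, hpb a b μ hμ, ← huv, map_add, map_add,
        hsame _ _ hu, hsame _ _ hv,
        hne _ _ _ hv (by simp only [ne_eq, Prod.mk.injEq, not_and]; omega),
        hne _ _ _ hu (by simp only [ne_eq, Prod.mk.injEq, not_and]; omega),
        add_zero, zero_add]
    · simp
    · intro x y hx hy
      rw [map_add, map_add, map_add, hx, hy]
      abel
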